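/- (Archimedes, On Conoids and Spheroids 7.) Given an ellipse and a point O on the line through its center perpendicular to its plane, there exists a circular cone with vertex O containing the ellipse: let a ≥ b > 0, let E = {(x, y, 0) ∈ ℝ³ : x²/a² + y²/b² = 1}, and let O = (0, 0, h) with h ≠ 0. Then there exist a point w ∈ ℝ³, a radius r > 0, and an affine plane Π ⊆ ℝ³ with O ∉ Π, such that the circle C = Π ∩ {v ∈ ℝ³ : ‖v − w‖ = r} is nonempty and, for every p ∈ E, there exists q ∈ C collinear with O and p (i.e., q lies on the straight line through O and p). -/

import Mathlib

open scoped RealInnerProductSpace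

/-- The vertex `O = (0, 0, h)` as a point of `EuclideanSpace ℝ (Fin 3)`. -/
noncomputable def coneVertex (h : ℝ) : EuclideanSpace ℝ (Fin 3) :=
  (WithLp.equiv 2 (Fin 3 → ℝ)).symm ![0, 0, h]

/-- Archimedes, On Conoids and Spheroids 7: given the ellipse
`E = {(x, y, 0) : x²/a² + y²/b² = 1}` (with `a ≥ b > 0`) and a point `O = (0, 0, h)`,
`h ≠ 0`, on the line through its center perpendicular to its plane, there is a circular
cone with vertex `O` containing the ellipse: there are a circle `C` (a nonempty
intersection of a sphere with an affine plane `Π = {v : ⟪v, n⟫ = δ}` not containing `O`)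
such that every point of `E` is collinear with `O` and some point of `C`. -/
theorem archimedes_cone_through_ellipse (a b h : ℝ) (hba : b ≤ a) (hb : 0 < b)
    (hh : h ≠ 0) :
    ∃ (w : EuclideanSpace ℝ (Fin 3)) (r : ℝ) (n : EuclideanSpace ℝ (Fin 3)) (δ : ℝ),
      0 < r ∧ n ≠ 0 ∧ ⟪coneVertex h, n⟫ ≠ δ ∧
      ({v : EuclideanSpace ℝ (Fin 3) | ⟪v, n⟫ = δ} ∩
        {v : EuclideanSpace ℝ (Fin 3) | ‖v - w‖ = r}).Nonempty ∧
      ∀ p : EuclideanSpace ℝ (Fin 3),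
        p 2 = 0 → (p 0) ^ 2 / a ^ 2 + (p 1) ^ 2 / b ^ 2 = 1 →
        ∃ q ∈ {v : EuclideanSpace ℝ (Fin 3) | ⟪v, n⟫ = δ} ∩
            {v : EuclideanSpace ℝ (Fin 3) | ‖v - w‖ = r},
          Collinear ℝ {coneVertex h, p, q} := by
  have ha : 0 < a := lt_of_lt_of_le hb hba
  have hs0 : (0:ℝ) ≤ h^2*(a^2-b^2)/(b^2*(a^2+h^2)) := by
    apply div_nonneg
    · exact mul_nonneg (sq_nonneg h) (by nlinarith)
    · positivity
  set β : ℝ := Real.sqrt (h^2*(a^2-b^2)/(b^2*(a^2+h^2))) with hβdef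
  have hβ2 : β^2 = h^2*(a^2-b^2)/(b^2*(a^2+h^2)) := Real.sq_sqrt hs0
  have hA : b^2*h^2*(1+β^2) = a^2*(h^2 - β^2*b^2) := by
    rw [hβ2]; field_simp; ring
  have h1β : (0:ℝ) < 1 + β^2 := by positivity
  set k : ℝ := β*a^2/(h*(1+β^2)) with hkdef
  set ρ2 : ℝ := a^2 + β^2*a^4/(h^2*(1+β^2)) with hρdef
  have hρ2 : 0 < ρ2 := by positivity
  have hk' : k*(h*(1+β^2)) = β*a^2 := by
    rw [hkdef]; field_simp
  have hρ' : ρ2*(h^2*(1+β^2)) = a^2*(h^2*(1+β^2)) + β^2*a^4 := by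
    rw [hρdef]; field_simp
  refine ⟨(WithLp.equiv 2 (Fin 3 → ℝ)).symm ![0, -k, -(β*k)], Real.sqrt ρ2,
    (WithLp.equiv 2 (Fin 3 → ℝ)).symm ![0, -β, 1], 0, Real.sqrt_pos.2 hρ2, ?_, ?_, ?_, ?_⟩
  · -- n ≠ 0
    intro H
    have h2 : ((WithLp.equiv 2 (Fin 3 → ℝ)).symm ![0, -β, 1] : EuclideanSpace ℝ (Fin 3)) 2
        = (0 : EuclideanSpace ℝ (Fin 3)) 2 := by rw [H]
    simp [WithLp.equiv_symm_apply, PiLp.toLp_apply] at h2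
  · -- O not on plane
    simp only [coneVertex, PiLp.inner_apply, Fin.sum_univ_three, WithLp.equiv_symm_apply, PiLp.toLp_apply,
      Matrix.cons_val_zero, Matrix.cons_val_one, Matrix.head_cons, Matrix.cons_val_two,
      Matrix.tail_cons, RCLike.inner_apply, conj_trivial]
    simpa using hh
  · -- nonempty circle
    refine ⟨(WithLp.equiv 2 (Fin 3 → ℝ)).symm ![Real.sqrt ρ2, -k, -(β*k)], ?_, ?_⟩
    · simp only [Set.mem_setOf_eq, PiLp.inner_apply, Fin.sum_univ_three,
        WithLp.equiv_symm_apply, PiLp.toLp_apply, Matrix.cons_val_zero, Matrix.cons_val_one, Matrix.head_cons,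
        Matrix.cons_val_two, Matrix.tail_cons, RCLike.inner_apply, conj_trivial]
      ring
    · simp only [Set.mem_setOf_eq]
      rw [EuclideanSpace.norm_eq]
      simp only [WithLp.equiv_symm_apply, PiLp.toLp_apply, PiLp.sub_apply, Matrix.cons_val_zero,
        Matrix.cons_val_one, Matrix.head_cons, Matrix.cons_val_two, Matrix.tail_cons,
        Fin.sum_univ_three, Real.norm_eq_abs, sq_abs]
      rw [show (Real.sqrt ρ2 - 0)^2 + (-k - -k)^2 + (-(β*k) - -(β*k))^2 = (Real.sqrt ρ2)^2 by
        ring]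
      rw [Real.sqrt_sq (Real.sqrt_nonneg _)]
  · -- main containment
    intro p hp2 hpe
    set x : ℝ := p 0 with hx
    set y : ℝ := p 1 with hy
    have hell : x^2*b^2 + y^2*a^2 = a^2*b^2 := by
      field_simp at hpe
      linarith [hpe]
    have hy2 : y^2 ≤ b^2 := by
      nlinarith [mul_pos ha ha, mul_nonneg (sq_nonneg x) (le_of_lt (mul_pos hb hb))]
    have hpos : (0:ℝ) < a^2*(h^2 - β^2*b^2) := by
      rw [← hA]; positivity
    have hβb : β^2*b^2 < h^2 := by nlinarith [mul_pos ha ha]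
    have hβy2 : β^2*y^2 < h^2 :=
      lt_of_le_of_lt (mul_le_mul_of_nonneg_left hy2 (sq_nonneg β)) hβb
    have hhy : h + β*y ≠ 0 := by
      intro H
      have h4 : β*y = -h := by linarith
      have h5 : β^2*y^2 = h^2 := by
        rw [show β^2*y^2 = (β*y)^2 by ring, h4]; ring
      linarith
    set t : ℝ := h/(h+β*y) with htdef
    have ht : t*(h+β*y) = h := by
      rw [htdef]; exact div_mul_cancel₀ h hhy
    have hu : h - t*h = β*(t*y) := by linear_combination -ht
    set q : EuclideanSpace ℝ (Fin 3) := coneVertex h + t • (p - coneVertex h) with hq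
    have hq0 : q 0 = t*x := by
      simp [hq, coneVertex, WithLp.equiv_symm_apply, PiLp.toLp_apply, hx]
    have hq1 : q 1 = t*y := by
      simp [hq, coneVertex, WithLp.equiv_symm_apply, PiLp.toLp_apply, hy]
    have hq2 : q 2 = β*(t*y) := by
      have : q 2 = h + t*(p 2 - h) := by
        simp [hq, coneVertex, WithLp.equiv_symm_apply, PiLp.toLp_apply]
      rw [this, hp2]
      linear_combination hu
    refine ⟨q, ⟨?_, ?_⟩, ?_⟩
    · -- q on plane
      simp only [Set.mem_setOf_eq, PiLp.inner_apply, Fin.sum_univ_three,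
        WithLp.equiv_symm_apply, PiLp.toLp_apply, Matrix.cons_val_zero, Matrix.cons_val_one, Matrix.head_cons,
        Matrix.cons_val_two, Matrix.tail_cons, RCLike.inner_apply, conj_trivial]
      rw [hq0, hq1, hq2]
      ring
    · -- q on sphere
      simp only [Set.mem_setOf_eq]
      rw [EuclideanSpace.norm_eq]
      simp only [PiLp.sub_apply, WithLp.equiv_symm_apply, PiLp.toLp_apply, Matrix.cons_val_zero,
        Matrix.cons_val_one, Matrix.head_cons, Matrix.cons_val_two, Matrix.tail_cons,
        Fin.sum_univ_three, Real.norm_eq_abs, sq_abs]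
      rw [hq0, hq1, hq2]
      have hmul : ((t*x)^2 + (t*y+k)^2 + (β*(t*y)+β*k)^2) * (b^2*h^2*(1+β^2))
          = ρ2 * (b^2*h^2*(1+β^2)) := by
        linear_combination ((1+β^2)*h^2*t^2)*hell + ((1+β^2)*t^2*y^2)*hA +
          ((1+β^2)*a^2*b^2*(t*h - β*t*y + h))*ht +
          (b^2*(k*h*(1+β^2) + β*a^2 + 2*t*y*h*(1+β^2)))*hk' - b^2*hρ'
      have hD : (b^2*h^2*(1+β^2)) ≠ 0 := by positivity
      have heq : (t*x)^2 + (t*y+k)^2 + (β*(t*y)+β*k)^2 = ρ2 :=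
        mul_right_cancel₀ hD hmul
      rw [show (t*x - 0)^2 + (t*y - -k)^2 + (β*(t*y) - -(β*k))^2
          = (t*x)^2 + (t*y+k)^2 + (β*(t*y)+β*k)^2 by ring, heq]
    · -- collinear
      have hmem : coneVertex h ∈ ({coneVertex h, p, q} : Set (EuclideanSpace ℝ (Fin 3))) := by
        simp
      rw [collinear_iff_of_mem hmem]
      refine ⟨p - coneVertex h, ?_⟩
      rintro r (rfl | rfl | rfl)
      · exact ⟨0, by rw [vadd_eq_add, zero_smul, zero_add]⟩
      · exact ⟨1, by rw [vadd_eq_add, one_smul]; abel⟩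
      · exact ⟨t, by rw [vadd_eq_add, hq]; abel⟩
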